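/- Let d ≥ 1 and let (μ_n), (ν_n), μ, ν be Borel probability measures on ℝ^d such that μ_n → μ weakly, ν_n → ν weakly, and μ_n ≤_st ν_n for every n. Then μ ≤_st ν. In particular, the stochastic order is a closed partial order relation on the space of Borel probability measures on ℝ^d with the topology of weak convergence. -/

import Mathlib

open MeasureTheory Filter Topology
open scoped ENNReal

/-- The stochastic order on Borel probability measures on `ℝ^d`:
`μ ≤ₛₜ ν` iff `∫ f dμ ≤ ∫ f dν` for every bounded measurable increasing `f`
(with respect to the coordinatewise partial order on `ℝ^d`). -/
def StochasticallyLE {d : ℕ} (μ ν : Measure (Fin d → ℝ)) : Prop :=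
  ∀ f : (Fin d → ℝ) → ℝ, Measurable f → (∃ M : ℝ, ∀ x, |f x| ≤ M) → Monotone f →
    ∫ x, f x ∂μ ≤ ∫ x, f x ∂ν

/-- The distance to an upper set is antitone. -/
lemma antitone_infDist_upperSet {d : ℕ} {U : Set (Fin d → ℝ)} (hU : IsUpperSet U) :
    Antitone fun x => Metric.infDist x U := by
  intro x y hxy
  rcases U.eq_empty_or_nonempty with rfl | hne
  · simp [Metric.infDist_empty]
  by_contra hlt
  push_neg at hlt
  obtain ⟨u, hu, hdu⟩ := (Metric.infDist_lt_iff hne).1 hlt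
  have h1 : u ⊔ y ∈ U := hU le_sup_left hu
  have h2 : dist y (u ⊔ y) ≤ dist x u := by
    refine (dist_pi_le_iff dist_nonneg).2 fun i => ?_
    have hle : dist (x i) (u i) ≤ dist x u := dist_le_pi_dist x u i
    have hxyi : x i ≤ y i := hxy i
    have : (u ⊔ y) i = max (u i) (y i) := rfl
    rw [this, Real.dist_eq]
    rw [Real.dist_eq] at hle
    rcases le_total (u i) (y i) with h | h
    · rw [max_eq_right h]
      simpa using le_trans (abs_nonneg _) hle
    · rw [max_eq_left h, abs_of_nonpos (by linarith)]
      have h4 : u i - x i ≤ |x i - u i| := by rw [abs_sub_comm]; exact le_abs_self _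
      linarith
  have h3 : Metric.infDist y U ≤ dist x u :=
    le_trans (Metric.infDist_le_dist_of_mem h1) h2
  exact absurd hdu (not_lt.2 h3)

/-- Closed upper sets: the measure inequality follows from the integral inequality for
continuous bounded monotone functions. -/
lemma measure_le_of_isClosed_isUpperSet {d : ℕ}
    {μ ν : Measure (Fin d → ℝ)} [IsProbabilityMeasure μ] [IsProbabilityMeasure ν]
    (hcont : ∀ g : (Fin d → ℝ) → ℝ, Continuous g → (∃ M : ℝ, ∀ x, |g x| ≤ M) → Monotone g →
      ∫ x, g x ∂μ ≤ ∫ x, g x ∂ν)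
    {F : Set (Fin d → ℝ)} (hF : IsClosed F) (hFu : IsUpperSet F) : μ F ≤ ν F := by
  rcases F.eq_empty_or_nonempty with rfl | hne
  · simp
  set g : ℕ → (Fin d → ℝ) → ℝ := fun k x => max 0 (1 - k * Metric.infDist x F) with hg
  have hgcont : ∀ k, Continuous (g k) := fun k =>
    continuous_const.max (continuous_const.sub
      (continuous_const.mul (Metric.continuous_infDist_pt F)))
  have hg0 : ∀ k x, 0 ≤ g k x := fun k x => le_max_left _ _
  have hg1 : ∀ k x, g k x ≤ 1 := fun k x =>
    max_le zero_le_one (sub_le_self _ (mul_nonneg (Nat.cast_nonneg k) Metric.infDist_nonneg))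
  have hgmono : ∀ k, Monotone (g k) := by
    intro k x y hxy
    refine max_le_max le_rfl (sub_le_sub_left ?_ 1)
    exact mul_le_mul_of_nonneg_left (antitone_infDist_upperSet hFu hxy) (Nat.cast_nonneg k)
  have hlim : ∀ x, Tendsto (fun k => g k x) atTop (𝓝 (F.indicator (fun _ => (1:ℝ)) x)) := by
    intro x
    by_cases hx : x ∈ F
    · have : ∀ k, g k x = 1 := by
        intro k
        simp [hg, Metric.infDist_zero_of_mem hx]
      simp only [this, Set.indicator_of_mem hx]
      exact tendsto_const_nhds
    · have hδ : 0 < Metric.infDist x F := (hF.notMem_iff_infDist_pos hne).1 hx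
      have hev : ∀ᶠ k : ℕ in atTop, g k x = 0 := by
        filter_upwards [eventually_ge_atTop ⌈(Metric.infDist x F)⁻¹⌉₊] with k hk
        have h1 : (Metric.infDist x F)⁻¹ ≤ (k : ℝ) :=
          le_trans (Nat.le_ceil _) (Nat.cast_le.2 hk)
        have h2 : (1:ℝ) ≤ k * Metric.infDist x F := by
          rw [← inv_mul_cancel₀ hδ.ne']
          exact mul_le_mul_of_nonneg_right h1 hδ.le
        have : (1:ℝ) - k * Metric.infDist x F ≤ 0 := by linarith
        simp [hg, max_eq_left this]
      rw [Set.indicator_of_notMem hx]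
      exact Tendsto.congr' (hev.mono fun k h => h.symm) tendsto_const_nhds
  have hbound : ∀ (ρ : Measure (Fin d → ℝ)) [IsProbabilityMeasure ρ],
      Tendsto (fun k => ∫ x, g k x ∂ρ) atTop (𝓝 ((ρ F).toReal)) := by
    intro ρ _
    rw [← measureReal_def, ← integral_indicator_one hF.measurableSet]
    exact tendsto_integral_of_dominated_convergence (fun _ => (1:ℝ))
      (fun k => (hgcont k).aestronglyMeasurable)
      (integrable_const 1)
      (fun k => ae_of_all _ fun x => by
        rw [Real.norm_eq_abs, abs_of_nonneg (hg0 k x)]; exact hg1 k x)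
      (ae_of_all _ hlim)
  have hle : (μ F).toReal ≤ (ν F).toReal := by
    refine le_of_tendsto_of_tendsto' (hbound μ) (hbound ν) fun k => ?_
    exact hcont (g k) (hgcont k)
      ⟨1, fun x => by rw [abs_of_nonneg (hg0 k x)]; exact hg1 k x⟩ (hgmono k)
  exact (ENNReal.toReal_le_toReal (measure_ne_top μ F) (measure_ne_top ν F)).1 hle

/-- Borel upper sets: via inner regularity and closed upper closures of compact sets. -/
lemma measure_le_of_isUpperSet {d : ℕ}
    {μ ν : Measure (Fin d → ℝ)} [IsProbabilityMeasure μ] [IsProbabilityMeasure ν]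
    (hF : ∀ F : Set (Fin d → ℝ), IsClosed F → IsUpperSet F → μ F ≤ ν F)
    {U : Set (Fin d → ℝ)} (hUm : MeasurableSet U) (hU : IsUpperSet U) : μ U ≤ ν U := by
  refine ENNReal.le_of_forall_pos_le_add fun ε hε _ => ?_
  obtain ⟨K, hKU, hKc, hK⟩ := hUm.exists_isCompact_lt_add (measure_ne_top μ U)
    (ε := (ε : ℝ≥0∞)) (by exact_mod_cast hε.ne')
  have hKclos : IsClosed (upperClosure K : Set (Fin d → ℝ)) :=
    hKc.isClosed.upperClosure_pi hKc.isBounded.bddBelow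
  have hsub : (upperClosure K : Set (Fin d → ℝ)) ⊆ U := upperClosure_min hKU hU
  have m1 : μ K ≤ μ (upperClosure K : Set (Fin d → ℝ)) := measure_mono subset_upperClosure
  have m2 : μ (upperClosure K : Set (Fin d → ℝ)) ≤ ν (upperClosure K : Set (Fin d → ℝ)) :=
    hF _ hKclos (upperClosure K).upper
  have m3 : ν (upperClosure K : Set (Fin d → ℝ)) ≤ ν U := measure_mono hsub
  calc μ U ≤ μ K + ε := hK.le
    _ ≤ ν U + ε := add_le_add_left (le_trans m1 (le_trans m2 m3)) _

/-- The stochastic order is closed under weak convergence: if `μ_n → μ` weakly,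
`ν_n → ν` weakly and `μ_n ≤ₛₜ ν_n` for every `n`, then `μ ≤ₛₜ ν`. -/
theorem stochastic_order_closed_under_weak_convergence
    (d : ℕ) (hd : 1 ≤ d)
    (μs νs : ℕ → Measure (Fin d → ℝ)) (μ ν : Measure (Fin d → ℝ))
    [∀ n, IsProbabilityMeasure (μs n)] [∀ n, IsProbabilityMeasure (νs n)]
    [IsProbabilityMeasure μ] [IsProbabilityMeasure ν]
    (hμ_weak : ∀ f : (Fin d → ℝ) → ℝ, Continuous f → (∃ M : ℝ, ∀ x, |f x| ≤ M) →
      Tendsto (fun n => ∫ x, f x ∂(μs n)) atTop (𝓝 (∫ x, f x ∂μ)))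
    (hν_weak : ∀ f : (Fin d → ℝ) → ℝ, Continuous f → (∃ M : ℝ, ∀ x, |f x| ≤ M) →
      Tendsto (fun n => ∫ x, f x ∂(νs n)) atTop (𝓝 (∫ x, f x ∂ν)))
    (h_le : ∀ n, StochasticallyLE (μs n) (νs n)) :
    StochasticallyLE μ ν := by
  -- Step 1: the integral inequality holds for continuous bounded monotone functions.
  have hcont : ∀ g : (Fin d → ℝ) → ℝ, Continuous g → (∃ M : ℝ, ∀ x, |g x| ≤ M) → Monotone g →
      ∫ x, g x ∂μ ≤ ∫ x, g x ∂ν := fun g hgc hgb hgm =>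
    le_of_tendsto_of_tendsto' (hμ_weak g hgc hgb) (hν_weak g hgc hgb)
      fun n => h_le n g hgc.measurable hgb hgm
  -- Step 2: measures of measurable upper sets are ordered.
  have hupper : ∀ U : Set (Fin d → ℝ), MeasurableSet U → IsUpperSet U → μ U ≤ ν U :=
    fun U hUm hU => measure_le_of_isUpperSet
      (fun F hFc hFu => measure_le_of_isClosed_isUpperSet hcont hFc hFu) hUm hU
  -- Step 3: layer cake.
  intro f hfm hfb hfmono
  obtain ⟨M, hM⟩ := hfb
  set g : (Fin d → ℝ) → ℝ := fun x => f x + M with hgdef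
  have hgm : Measurable g := hfm.add measurable_const
  have hg0 : ∀ x, 0 ≤ g x := fun x => by have := (abs_le.1 (hM x)).1; simp [hgdef]; linarith
  have hg2M : ∀ x, g x ≤ 2 * M := fun x => by
    have := (abs_le.1 (hM x)).2; simp [hgdef]; linarith
  have hgmono : Monotone g := fun x y hxy => by
    simp only [hgdef]; exact add_le_add_left (hfmono hxy) M
  have hint : ∀ (ρ : Measure (Fin d → ℝ)) [IsProbabilityMeasure ρ], Integrable g ρ := by
    intro ρ _
    refine (integrable_const (2 * M)).mono' hgm.aestronglyMeasurable (ae_of_all _ fun x => ?_)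
    rw [Real.norm_eq_abs, abs_of_nonneg (hg0 x)]
    exact hg2M x
  have hintf : ∀ (ρ : Measure (Fin d → ℝ)) [IsProbabilityMeasure ρ], Integrable f ρ := by
    intro ρ _
    refine (integrable_const M).mono' hfm.aestronglyMeasurable (ae_of_all _ fun x => hM x)
  have hμeq := (hint μ).integral_eq_integral_Ioc_meas_le (M := 2 * M)
    (ae_of_all _ hg0) (ae_of_all _ hg2M)
  have hνeq := (hint ν).integral_eq_integral_Ioc_meas_le (M := 2 * M)
    (ae_of_all _ hg0) (ae_of_all _ hg2M)
  have hνint : Integrable (fun t => (ν {a | t ≤ g a}).toReal)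
      (volume.restrict (Set.Ioc 0 (2 * M))) := by
    refine Integrable.mono' (g := fun _ => (1:ℝ)) ?_ ?_ (ae_of_all _ fun t => ?_)
    · exact integrableOn_const measure_Ioc_lt_top.ne
    · refine (Measurable.ennreal_toReal ?_).aestronglyMeasurable
      exact Antitone.measurable fun s t hst => measure_mono fun a ha => le_trans hst ha
    · rw [Real.norm_eq_abs, abs_of_nonneg ENNReal.toReal_nonneg]
      have : (ν {a | t ≤ g a}).toReal ≤ (1 : ℝ≥0∞).toReal :=
        ENNReal.toReal_mono ENNReal.one_ne_top prob_le_one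
      simpa using this
  have hkey : ∫ x, g x ∂μ ≤ ∫ x, g x ∂ν := by
    rw [hμeq, hνeq]
    refine integral_mono_of_nonneg (ae_of_all _ fun t => ENNReal.toReal_nonneg) hνint
      (ae_of_all _ fun t => ?_)
    have hUm : MeasurableSet {a : Fin d → ℝ | t ≤ g a} :=
      measurableSet_le measurable_const hgm
    have hUu : IsUpperSet {a : Fin d → ℝ | t ≤ g a} :=
      fun a b hab ha => le_trans ha (hgmono hab)
    exact ENNReal.toReal_mono (measure_ne_top _ _) (hupper _ hUm hUu)
  have hμg : ∫ x, g x ∂μ = (∫ x, f x ∂μ) + M := by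
    rw [hgdef]
    rw [integral_add (hintf μ) (integrable_const M)]
    simp
  have hνg : ∫ x, g x ∂ν = (∫ x, f x ∂ν) + M := by
    rw [hgdef]
    rw [integral_add (hintf ν) (integrable_const M)]
    simp
  rw [hμg, hνg] at hkey
  linarith
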